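/- In a search game where each player i has capacity K_i and M_i denotes the size of the largest cell of player i's partition, if ∑_{i∈N} K_i / M_i ≥ 1, then there exists an exhaustive pure strategy profile, i.e., a profile under which every location is searched by at least one player. -/

import Mathlib

open scoped Classical
noncomputable section

variable {N Ω : Type}

/-- `P` is a partition of the finite type `Ω` into nonempty, pairwise disjoint cells. -/
def IsPartition [Fintype Ω] [DecidableEq Ω] (P : Finset (Finset Ω)) : Prop :=
  (∀ π ∈ P, π.Nonempty) ∧
  (∀ π ∈ P, ∀ π' ∈ P, π ≠ π' → Disjoint π π') ∧
  (∀ ω : Ω, ∃ π ∈ P, ω ∈ π)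

/-- `f` is a valid strategy for player `i`: in every cell it searches a subset of
the cell of size at most the capacity `K i`. -/
def ValidFor [DecidableEq Ω] (Part : N → Finset (Finset Ω)) (K : N → ℕ) (i : N)
    (f : Finset Ω → Finset Ω) : Prop :=
  ∀ π ∈ Part i, f π ⊆ π ∧ (f π).card ≤ K i

/-- A valid pure strategy profile. -/
def ValidStrat [DecidableEq Ω] (Part : N → Finset (Finset Ω)) (K : N → ℕ)
    (s : N → Finset Ω → Finset Ω) : Prop :=
  ∀ i, ValidFor Part K i (s i)

/-- Player `i` searches location `ω` under profile `s` (when the prize is at `ω`). -/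
def searchesAt (Part : N → Finset (Finset Ω)) (s : N → Finset Ω → Finset Ω)
    (i : N) (ω : Ω) : Prop :=
  ∃ π ∈ Part i, ω ∈ π ∧ ω ∈ s i π

/-- Location `ω` is searched by some player under profile `s`. -/
def searched (Part : N → Finset (Finset Ω)) (s : N → Finset Ω → Finset Ω)
    (ω : Ω) : Prop :=
  ∃ i, searchesAt Part s i ω

/-- The number of players searching `ω` under `s`. -/
def mcount [Fintype N] (Part : N → Finset (Finset Ω))
    (s : N → Finset Ω → Finset Ω) (ω : Ω) : ℕ :=
  (Finset.univ.filter fun i => searchesAt Part s i ω).card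


/-- If `∑_i K i / M i ≥ 1`, where `M i` is the size of the largest cell of
player `i`'s partition, then the search game admits an exhaustive pure strategy
profile: one under which every location is searched by at least one player. -/
theorem exists_exhaustive_profile_of_capacity_over_max_cell
    {N Ω : Type} [Fintype N] [Fintype Ω] [DecidableEq Ω] [Nonempty Ω]
    (Part : N → Finset (Finset Ω)) (K : N → ℕ)
    (hPart : ∀ i, IsPartition (Part i))
    (hK : ∀ i, 1 ≤ K i)
    (hsum : (1 : ℝ) ≤ ∑ i, (K i : ℝ) / (((Part i).sup Finset.card : ℕ) : ℝ)) :
    ∃ s : N → Finset Ω → Finset Ω, ValidStrat Part K s ∧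
      ∀ ω : Ω, searched Part s ω := by
  classical
  set M : N → ℕ := fun i => (Part i).sup Finset.card with hMdef
  have hM1 : ∀ i, 1 ≤ M i := by
    intro i
    obtain ⟨ω⟩ := (inferInstance : Nonempty Ω)
    obtain ⟨π, hπ, hωπ⟩ := (hPart i).2.2 ω
    exact le_trans (Finset.card_pos.mpr ⟨ω, hωπ⟩) (Finset.le_sup hπ)
  -- slot sets for Hall's theorem
  set T : Ω → Finset (N × Finset Ω × ℕ) := fun ω =>
    Finset.univ.biUnion (fun i => ((Part i).filter (fun π => ω ∈ π)).biUnion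
      (fun π => (Finset.range (K i)).image (fun k => (i, π, k)))) with hTdef
  have hall : ∀ s : Finset Ω, s.card ≤ (s.biUnion T).card := by
    intro s
    set C : N → Finset (Finset Ω) := fun i =>
      (Part i).filter (fun π => (π ∩ s).Nonempty) with hCdef
    set D : Finset (N × Finset Ω × ℕ) := Finset.univ.biUnion (fun i =>
      (C i).biUnion (fun π => (Finset.range (K i)).image (fun k => (i, π, k)))) with hDdef
    have hDsub : D ⊆ s.biUnion T := by
      intro x hx
      simp only [hDdef, hCdef, Finset.mem_biUnion, Finset.mem_image, Finset.mem_range,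
        Finset.mem_filter, Finset.mem_univ, true_and] at hx
      obtain ⟨i, π, ⟨hπ, ω, hω⟩, k, hk, rfl⟩ := hx
      rw [Finset.mem_inter] at hω
      refine Finset.mem_biUnion.mpr ⟨ω, hω.2, ?_⟩
      simp only [hTdef, Finset.mem_biUnion, Finset.mem_image, Finset.mem_range,
        Finset.mem_filter, Finset.mem_univ, true_and]
      exact ⟨i, π, ⟨hπ, hω.1⟩, k, hk, rfl⟩
    have hDcard : D.card = ∑ i, (C i).card * K i := by
      rw [hDdef, Finset.card_biUnion]
      · refine Finset.sum_congr rfl ?_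
        intro i _
        rw [Finset.card_biUnion]
        · have : ∀ π ∈ C i, ((Finset.range (K i)).image (fun k => (i, π, k))).card = K i := by
            intro π _
            have hinj : Function.Injective (fun k : ℕ => (i, π, k)) := by
              intro a b h
              simpa using congrArg (fun p : N × Finset Ω × ℕ => p.2.2) h
            rw [Finset.card_image_of_injective _ hinj]
            exact Finset.card_range _
          rw [Finset.sum_congr rfl this, Finset.sum_const, smul_eq_mul]
        · intro π _ π' _ hne
          rw [Function.onFun, Finset.disjoint_left]
          rintro x hx hx'
          simp only [Finset.mem_image, Finset.mem_range] at hx hx'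
          obtain ⟨k, -, rfl⟩ := hx
          obtain ⟨k', -, h⟩ := hx'
          exact hne ((congrArg (fun p : N × Finset Ω × ℕ => p.2.1) h).symm)
      · intro i _ i' _ hne
        rw [Function.onFun, Finset.disjoint_left]
        rintro x hx hx'
        simp only [Finset.mem_biUnion, Finset.mem_image, Finset.mem_range] at hx hx'
        obtain ⟨π, -, k, -, rfl⟩ := hx
        obtain ⟨π', -, k', -, h⟩ := hx'
        exact hne ((congrArg (fun p : N × Finset Ω × ℕ => p.1) h).symm)
    have hCM : ∀ i, s.card ≤ (C i).card * M i := by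
      intro i
      have hsS : s ⊆ (C i).biUnion (fun π => π ∩ s) := by
        intro ω hω
        obtain ⟨π, hπ, hωπ⟩ := (hPart i).2.2 ω
        have hmem : ω ∈ π ∩ s := Finset.mem_inter.mpr ⟨hωπ, hω⟩
        exact Finset.mem_biUnion.mpr ⟨π, Finset.mem_filter.mpr ⟨hπ, ⟨ω, hmem⟩⟩, hmem⟩
      calc s.card ≤ ((C i).biUnion fun π => π ∩ s).card := Finset.card_le_card hsS
        _ ≤ ∑ π ∈ C i, (π ∩ s).card := Finset.card_biUnion_le
        _ ≤ ∑ _π ∈ C i, M i := by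
            refine Finset.sum_le_sum ?_
            intro π hπ
            exact le_trans (Finset.card_le_card Finset.inter_subset_left)
              (Finset.le_sup (Finset.mem_filter.mp hπ).1)
        _ = (C i).card * M i := by rw [Finset.sum_const, smul_eq_mul]
    have key : (s.card : ℝ) ≤ ∑ i, ((C i).card : ℝ) * (K i : ℝ) := by
      have h0 : (s.card : ℝ) = (s.card : ℝ) * 1 := (mul_one _).symm
      calc (s.card : ℝ) = (s.card : ℝ) * 1 := h0
        _ ≤ (s.card : ℝ) * ∑ i, (K i : ℝ) / (M i : ℝ) :=
            mul_le_mul_of_nonneg_left hsum (Nat.cast_nonneg _)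
        _ = ∑ i, (s.card : ℝ) * ((K i : ℝ) / (M i : ℝ)) := Finset.mul_sum _ _ _
        _ ≤ ∑ i, ((C i).card : ℝ) * (K i : ℝ) := by
            refine Finset.sum_le_sum ?_
            intro i _
            have hMpos : (0 : ℝ) < (M i : ℝ) := by exact_mod_cast hM1 i
            have h1 : (s.card : ℝ) ≤ ((C i).card : ℝ) * (M i : ℝ) := by
              exact_mod_cast hCM i
            have hK0 : (0 : ℝ) ≤ (K i : ℝ) := Nat.cast_nonneg _
            rw [← mul_div_assoc, div_le_iff₀ hMpos]
            nlinarith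
    have keyN : s.card ≤ ∑ i, (C i).card * K i := by exact_mod_cast key
    calc s.card ≤ ∑ i, (C i).card * K i := keyN
      _ = D.card := hDcard.symm
      _ ≤ (s.biUnion T).card := Finset.card_le_card hDsub
  obtain ⟨f, hfinj, hf⟩ := (Finset.all_card_le_biUnion_card_iff_exists_injective T).mp hall
  have hfT : ∀ ω, ∃ i, ∃ π ∈ Part i, ω ∈ π ∧ ∃ k < K i, f ω = (i, π, k) := by
    intro ω
    have := hf ω
    simp only [hTdef, Finset.mem_biUnion, Finset.mem_image, Finset.mem_range,
      Finset.mem_filter, Finset.mem_univ, true_and] at this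
    obtain ⟨i, π, ⟨hπ, hωπ⟩, k, hk, hfe⟩ := this
    exact ⟨i, π, hπ, hωπ, k, hk, hfe.symm⟩
  refine ⟨fun i π => Finset.univ.filter (fun ω => (f ω).1 = i ∧ (f ω).2.1 = π), ?_, ?_⟩
  · intro i π hπ
    constructor
    · intro ω hω
      rw [Finset.mem_filter] at hω
      obtain ⟨-, h1, h2⟩ := hω
      obtain ⟨i', π', hπ', hωπ', k, hk, hfe⟩ := hfT ω
      rw [hfe] at h1 h2
      simp only at h1 h2
      subst h1; subst h2
      exact hωπ'
    · have hinj : Set.InjOn (fun ω => (f ω).2.2)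
          ((Finset.univ.filter (fun ω => (f ω).1 = i ∧ (f ω).2.1 = π)) : Finset Ω) := by
        intro a ha b hb hab
        rw [Finset.coe_filter] at ha hb
        obtain ⟨-, ha1, ha2⟩ := ha
        obtain ⟨-, hb1, hb2⟩ := hb
        apply hfinj
        rw [Prod.ext_iff, Prod.ext_iff]
        exact ⟨ha1.trans hb1.symm, ⟨ha2.trans hb2.symm, hab⟩⟩
      have hsub2 : Finset.image (fun ω => (f ω).2.2)
          (Finset.univ.filter (fun ω => (f ω).1 = i ∧ (f ω).2.1 = π)) ⊆
          Finset.range (K i) := by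
        intro k hk
        simp only [Finset.mem_image, Finset.mem_filter, Finset.mem_univ, true_and] at hk
        obtain ⟨ω, ⟨h1, h2⟩, rfl⟩ := hk
        obtain ⟨i', π', hπ', hωπ', k', hk', hfe⟩ := hfT ω
        rw [hfe] at h1 ⊢
        simp only at h1 ⊢
        subst h1
        exact Finset.mem_range.mpr hk'
      calc (Finset.univ.filter (fun ω => (f ω).1 = i ∧ (f ω).2.1 = π)).card
          = (Finset.image (fun ω => (f ω).2.2)
              (Finset.univ.filter (fun ω => (f ω).1 = i ∧ (f ω).2.1 = π))).card :=
            (Finset.card_image_of_injOn hinj).symm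
        _ ≤ (Finset.range (K i)).card := Finset.card_le_card hsub2
        _ = K i := Finset.card_range _
  · intro ω
    obtain ⟨i, π, hπ, hωπ, k, hk, hfe⟩ := hfT ω
    refine ⟨i, π, hπ, hωπ, ?_⟩
    rw [Finset.mem_filter]
    exact ⟨Finset.mem_univ _, by rw [hfe], by rw [hfe]⟩
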